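/- For every integer n ≥ 3, the map Φ_n : A_n → N_n defined by Φ_n(S) = (S \ {n}) ∪ (n, ∞) is injective but not surjective; in particular the ordinary semigroup O_{n+1} = {0} ∪ [n+1, ∞) lies in N_n but not in the image of Φ_n. -/
import Mathlib


/-- A numerical semigroup: a cofinite additive submonoid of ℕ containing 0. -/
structure NumericalSemigroup where
  carrier : Set ℕ
  zero_mem : 0 ∈ carrier
  add_mem : ∀ ⦃a b : ℕ⦄, a ∈ carrier → b ∈ carrier → a + b ∈ carrier
  cofinite : (carrierᶜ : Set ℕ).Finite

namespace NumericalSemigroup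

/-- The primitives (minimal generators): nonzero elements not expressible as a sum
of two nonzero elements. -/
def primitives (S : NumericalSemigroup) : Set ℕ :=
  {x | x ∈ S.carrier ∧ x ≠ 0 ∧
    ¬ ∃ a b : ℕ, a ∈ S.carrier ∧ b ∈ S.carrier ∧ a ≠ 0 ∧ b ≠ 0 ∧ x = a + b}

/-- The maximum primitive. -/
noncomputable def maxPrim (S : NumericalSemigroup) : ℕ := sSup (primitives S)

/-- The multiplicity: the least primitive (= least nonzero element). -/
noncomputable def multiplicity (S : NumericalSemigroup) : ℕ := sInf (primitives S)

/-- The Frobenius number: the largest gap (0 for ℕ by convention here). -/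
noncomputable def frob (S : NumericalSemigroup) : ℕ := sSup (S.carrierᶜ)

/-- The set of left elements. -/
noncomputable def lefts (S : NumericalSemigroup) : Set ℕ := S.carrier ∩ Set.Iio (frob S)

/-- The extended set of left elements. -/
noncomputable def extLefts (S : NumericalSemigroup) : Set ℕ := lefts S ∪ {frob S}

end NumericalSemigroup

open NumericalSemigroup

/-- The gcd of a set of naturals: the greatest common divisor of all its elements. -/
noncomputable def setGcd (A : Set ℕ) : ℕ := sSup {d | ∀ x ∈ A, d ∣ x}

/-- The number of numerical semigroups with maximum primitive `n`. -/
noncomputable def countMaxPrim (n : ℕ) : ℕ :=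
  {S : NumericalSemigroup | maxPrim S = n}.ncard

/-- The number of numerical semigroups with Frobenius number `n`. -/
noncomputable def countFrob (n : ℕ) : ℕ :=
  {S : NumericalSemigroup | frob S = n}.ncard

/-- The ordinary semigroup `O_n = {0} ∪ [n, ∞)`. -/
def ordinary (n : ℕ) : NumericalSemigroup where
  carrier := {x : ℕ | x = 0 ∨ n ≤ x}
  zero_mem := Or.inl rfl
  add_mem := by rintro a b (ha | ha) (hb | hb) <;> simp only [Set.mem_setOf_eq] <;> omega
  cofinite := Set.Finite.subset (Set.finite_Iio n) (by
    intro x hx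
    simp only [Set.mem_compl_iff, Set.mem_setOf_eq, not_or, not_le] at hx
    exact hx.2)

lemma NumericalSemigroup.exists_large_mem (S : NumericalSemigroup) :
    ∃ N, 0 < N ∧ ∀ x, N ≤ x → x ∈ S.carrier := by
  obtain ⟨K, hK⟩ := S.cofinite.bddAbove
  refine ⟨K + 1, Nat.succ_pos _, fun x hx => ?_⟩
  by_contra hxc
  exact absurd (hK hxc) (by omega)

lemma NumericalSemigroup.bddAbove_primitives (S : NumericalSemigroup) :
    BddAbove (primitives S) := by
  obtain ⟨N, hN0, hN⟩ := S.exists_large_mem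
  refine ⟨2 * N, fun p hp => ?_⟩
  by_contra hlt
  push_neg at hlt
  exact hp.2.2 ⟨N, p - N, hN N le_rfl, hN _ (by omega), by omega, by omega, by omega⟩

lemma NumericalSemigroup.maxPrim_mem {S : NumericalSemigroup} {n : ℕ}
    (h : maxPrim S = n) (hn : n ≠ 0) : n ∈ primitives S := by
  have hne : (primitives S).Nonempty := by
    by_contra he
    rw [Set.not_nonempty_iff_eq_empty] at he
    rw [maxPrim, he, csSup_empty] at h
    exact hn h.symm
  rw [← h, maxPrim]
  exact Nat.sSup_mem hne S.bddAbove_primitives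

lemma NumericalSemigroup.decomp {S : NumericalSemigroup} {n x : ℕ}
    (h : maxPrim S = n) (hx : x ∈ S.carrier) (hgt : n < x) :
    ∃ a b, a ∈ S.carrier ∧ b ∈ S.carrier ∧ a ≠ 0 ∧ b ≠ 0 ∧ x = a + b := by
  by_contra hc
  have hmem : x ∈ primitives S := ⟨hx, by omega, hc⟩
  have hle : x ≤ maxPrim S := le_csSup S.bddAbove_primitives hmem
  omega

lemma NumericalSemigroup.inj_aux {S T : NumericalSemigroup} {n : ℕ}
    (hS : maxPrim S = n) (hT : maxPrim T = n)
    (h : (S.carrier \ {n}) ∪ Set.Ioi n = (T.carrier \ {n}) ∪ Set.Ioi n)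
    (hn : n ≠ 0) :
    ∀ x, x ∈ S.carrier → x ∈ T.carrier := by
  intro x
  induction x using Nat.strong_induction_on with
  | _ x ih =>
    intro hx
    rcases lt_trichotomy x n with hlt | heq | hgt
    · have hx' : x ∈ (S.carrier \ {n}) ∪ Set.Ioi n := Or.inl ⟨hx, by simp; omega⟩
      rw [h] at hx'
      rcases hx' with h1 | h1
      · exact h1.1
      · simp only [Set.mem_Ioi] at h1; omega
    · subst heq; exact (NumericalSemigroup.maxPrim_mem hT hn).1
    · obtain ⟨a, b, ha, hb, ha0, hb0, hab⟩ := NumericalSemigroup.decomp hS hx hgt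
      exact hab ▸ T.add_mem (ih a (by omega) ha) (ih b (by omega) hb)

lemma NumericalSemigroup.sum_prim_dvd {S : NumericalSemigroup} {n : ℕ}
    (hp : ∀ p ∈ primitives S, p = n) : ∀ x ∈ S.carrier, n ∣ x := by
  intro x
  induction x using Nat.strong_induction_on with
  | _ x ih =>
    intro hx
    rcases eq_or_ne x 0 with rfl | hx0
    · exact dvd_zero n
    by_cases hprim : x ∈ primitives S
    · rw [hp x hprim]
    · have hdec : ∃ a b, a ∈ S.carrier ∧ b ∈ S.carrier ∧ a ≠ 0 ∧ b ≠ 0 ∧ x = a + b := by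
        by_contra hc
        exact hprim ⟨hx, hx0, hc⟩
      obtain ⟨a, b, ha, hb, ha0, hb0, rfl⟩ := hdec
      exact Nat.dvd_add (ih a (by omega) ha) (ih b (by omega) hb)

theorem Phi_injective_not_surjective (n : ℕ) (hn : 3 ≤ n) :
    (∀ S T : NumericalSemigroup, maxPrim S = n → maxPrim T = n →
        (S.carrier \ {n}) ∪ Set.Ioi n = (T.carrier \ {n}) ∪ Set.Ioi n → S = T) ∧
    frob (ordinary (n + 1)) = n ∧
    ¬ ∃ S : NumericalSemigroup, maxPrim S = n ∧
        (ordinary (n + 1)).carrier = (S.carrier \ {n}) ∪ Set.Ioi n := by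
  refine ⟨?_, ?_, ?_⟩
  · -- injectivity
    intro S T hS hT h
    have h1 := NumericalSemigroup.inj_aux hS hT h (by omega)
    have h2 := NumericalSemigroup.inj_aux hT hS h.symm (by omega)
    have hcar : S.carrier = T.carrier := Set.Subset.antisymm h1 h2
    cases S; cases T; simp_all
  · -- frob of ordinary (n+1) is n
    have hcompl : ((ordinary (n + 1)).carrierᶜ : Set ℕ) = Set.Icc 1 n := by
      ext x
      simp only [ordinary, Set.mem_compl_iff, Set.mem_setOf_eq, not_or, not_le,
        Set.mem_Icc]
      omega
    rw [frob, hcompl]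
    apply le_antisymm
    · exact csSup_le ⟨1, by simp; omega⟩ fun x hx => hx.2
    · exact le_csSup bddAbove_Icc ⟨by omega, le_rfl⟩
  · -- non-surjectivity
    rintro ⟨S, hmax, heq⟩
    have hmid : ∀ x, 0 < x → x < n → x ∉ S.carrier := by
      intro x h1 h2 hx
      have hmem : x ∈ (ordinary (n + 1)).carrier := by
        rw [heq]; exact Or.inl ⟨hx, by simp; omega⟩
      simp only [ordinary, Set.mem_setOf_eq] at hmem
      omega
    have hp : ∀ p ∈ primitives S, p = n := by
      intro p hpp
      have h1 : p ≤ maxPrim S := le_csSup S.bddAbove_primitives hpp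
      rw [hmax] at h1
      have hp0 := hpp.2.1
      by_contra hne
      exact hmid p (by omega) (by omega) hpp.1
    have hdvd := NumericalSemigroup.sum_prim_dvd hp
    have hinf : (S.carrierᶜ : Set ℕ).Infinite := by
      apply Set.infinite_of_injective_forall_mem (f := fun k : ℕ => k * n + 1)
      case hi =>
        intro a b hab
        simp only at hab
        have : a * n = b * n := by omega
        exact Nat.eq_of_mul_eq_mul_right (by omega) this
      case hf =>
        intro k
        show k * n + 1 ∈ S.carrierᶜ
        intro hk
        have hd : n ∣ k * n + 1 := hdvd _ hk
        have h1 : n ∣ 1 := (Nat.dvd_add_right (dvd_mul_left n k)).mp hd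
        have := Nat.le_of_dvd one_pos h1
        omega
    exact hinf S.cofinite
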